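/- arXiv:1304.0800 — 2 statements merged into one kernel-verified Lean document; each statement's English description precedes it below -/
import Mathlib

section
/- Let γ be any real number and k ≥ 1. There exists s₀ ≥ 0 such that for every real s > s₀ the operators I − γ L_k(s) δ on E_k and I − γ L^0_{k−1}(s) on ℓ¹(X_{k−1}^+) are boundedly invertible, and (I − γ L_k(s) δ)^{−1} L_k(s) = L_k(s) + γ L^0_{k,k−1}(s) (I − γ L^0_{k−1}(s))^{−1} L^0_{k−1,k}(s). -/
open MeasureTheory Set
open scoped Classical
noncomputable section

/-- Configurations of `n` particles on `ℤ⁺`: strictly increasing `n`-tuples of naturals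
(`X_0` is a singleton). -/
def Conf (n : ℕ) : Type := {x : Fin n → ℕ // StrictMono x}

instance (n : ℕ) : DecidableEq (Conf n) := by unfold Conf; infer_instance

/-- `E_n = ℓ¹(X_n)`. -/
abbrev En (n : ℕ) : Type := lp (fun _ : Conf n => ℝ) 1

/-- Real-valued indicator of a proposition. -/
def ind (P : Prop) : ℝ := if P then 1 else 0

/-- Extension of a function on configurations to all tuples, by zero. -/
def extFun {n : ℕ} (u : Conf n → ℝ) (y : Fin n → ℕ) : ℝ :=
  if h : StrictMono y then u ⟨y, h⟩ else 0

/-- The tuple `x^{i,+}`. -/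
def up {n : ℕ} (x : Fin n → ℕ) (i : Fin n) : Fin n → ℕ := Function.update x i (x i + 1)

/-- The tuple `x^{i,-}`. -/
def down {n : ℕ} (x : Fin n → ℕ) (i : Fin n) : Fin n → ℕ := Function.update x i (x i - 1)

/-- `x^{i,+} ∈ X_n`. -/
def upOK {n : ℕ} (x : Fin n → ℕ) (i : Fin n) : Prop := StrictMono (up x i)

/-- `x^{i,-} ∈ X_n`: the particle at site `x i` can move left to a nonnegative site. -/
def downOK {n : ℕ} (x : Fin n → ℕ) (i : Fin n) : Prop := 0 < x i ∧ StrictMono (down x i)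

/-- The action of the `n`-particle ASEP generator on `ℤ⁺`. -/
def Qact (p q : ℝ) {n : ℕ} (u : Conf n → ℝ) (x : Conf n) : ℝ :=
  ∑ i : Fin n,
    (p * ind (downOK x.1 i) * extFun u (down x.1 i)
     + q * ind (upOK x.1 i) * extFun u (up x.1 i)
     - p * ind (upOK x.1 i) * u x
     - q * ind (downOK x.1 i) * u x)

/-- The action of `δ` (multiplication by the indicator of `x₁ = 0`; zero on `E₀`). -/
def Dact {n : ℕ} (u : Conf n → ℝ) (x : Conf n) : ℝ :=
  ind (∃ h : 0 < n, x.1 ⟨0, h⟩ = 0) * u x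

/-- Tail of a configuration. -/
def confTail {n : ℕ} (x : Conf (n+1)) : Conf n :=
  ⟨fun i => x.1 i.succ, fun _ _ h => x.2 (Fin.succ_lt_succ_iff.mpr h)⟩

/-- The action of `A_{n+1} : E_n → E_{n+1}`, `(A F)(x₁,…,x_{n+1}) = 1{x₁=0}·F(x₂,…,x_{n+1})`. -/
def Aact {n : ℕ} (F : Conf n → ℝ) (x : Conf (n+1)) : ℝ :=
  ind (x.1 0 = 0) * F (confTail x)

/-- The action of `B_n : E_{n+1} → E_n`, `(B F)(x₁,…,x_n) = 1{x₁>0}·F(0,x₁,…,x_n)`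
(for `n = 0`, `B₀ F = F(0)`). -/
def Bact {n : ℕ} (F : Conf (n+1) → ℝ) (x : Conf n) : ℝ :=
  ind (¬ ∃ h : 0 < n, x.1 ⟨0, h⟩ = 0) * extFun F (Fin.cons 0 x.1)

/-- Laplace transform `L(s) = ∫_0^∞ e^{-st} e^{tQ} dt` of the semigroup generated by `Q`. -/
def Lop {X : Type} [NormedAddCommGroup X] [NormedSpace ℝ X] [CompleteSpace X]
    (Q : X →L[ℝ] X) (s : ℝ) : X →L[ℝ] X :=
  ∫ t in Ioi (0:ℝ), Real.exp (-(s*t)) • (NormedSpace.expSeries ℝ (X →L[ℝ] X)).sum (t • Q)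

/-- The Bochner integral defining `L(s)` converges. -/
def LapConv {X : Type} [NormedAddCommGroup X] [NormedSpace ℝ X] [CompleteSpace X]
    (Q : X →L[ℝ] X) (s : ℝ) : Prop :=
  IntegrableOn (fun t => Real.exp (-(s*t)) • (NormedSpace.expSeries ℝ (X →L[ℝ] X)).sum (t • Q)) (Ioi (0:ℝ))


/-- Configurations with `x₁ > 0` (all of `X_0` when `n = 0`). -/
def ConfP (n : ℕ) : Type := {x : Conf n // ∀ h : 0 < n, 0 < x.1 ⟨0, h⟩}

instance (n : ℕ) : DecidableEq (ConfP n) := by unfold ConfP Conf; infer_instance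

/-- The configuration `(0, x)` for `x ∈ X_n⁺`. -/
def cons0 {n : ℕ} (x : ConfP n) : Conf (n+1) :=
  ⟨Fin.cons 0 x.1.1, by
    intro i j hij
    induction j using Fin.cases with
    | zero => exact absurd hij (Fin.not_lt_zero _).elim
    | succ j' =>
      induction i using Fin.cases with
      | zero =>
        simp only [Fin.cons_zero, Fin.cons_succ]
        exact lt_of_lt_of_le (x.2 j'.pos)
          (x.1.2.monotone (by simp [Fin.le_def]))
      | succ i' =>
        simp only [Fin.cons_succ]
        exact x.1.2 (by exact_mod_cast Fin.succ_lt_succ_iff.mp hij)⟩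

/-- `ℓ¹(X_n⁺)`. -/
abbrev Ep (n : ℕ) : Type := lp (fun _ : ConfP n => ℝ) 1

/-! ### Auxiliary material -/

section L1Helpers

open scoped ENNReal NNReal Nat

variable {α β : Type*}

lemma memL1 {f : α → ℝ} (h : Summable fun a => ‖f a‖) : Memℓp f 1 :=
  memℓp_gen (by simpa using h)

lemma summable_of_memL1 (f : lp (fun _ : α => ℝ) 1) : Summable fun a => ‖f a‖ := by
  have h := (lp.memℓp f).summable (p := (1 : ℝ≥0∞)) (by norm_num)
  simpa using h

lemma hasSum_norm_L1 (f : lp (fun _ : α => ℝ) 1) : HasSum (fun a => ‖f a‖) ‖f‖ := by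
  have h := lp.hasSum_norm (p := (1 : ℝ≥0∞)) (by norm_num) f
  simpa using h

variable (g : α → β)

/-- Pullback along an injective map, as a linear map on `ℓ¹`. -/
def pullL (hg : Function.Injective g) : lp (fun _ : β => ℝ) 1 →ₗ[ℝ] lp (fun _ : α => ℝ) 1 where
  toFun F := ⟨fun a => F (g a), memL1 ((summable_of_memL1 F).comp_injective hg)⟩
  map_add' F G := by
    apply lp.ext; funext a
    simp only [lp.coeFn_add, Pi.add_apply]
  map_smul' c F := by
    apply lp.ext; funext a
    simp only [lp.coeFn_smul, Pi.smul_apply, RingHom.id_apply]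

lemma pullL_apply (hg : Function.Injective g) (F : lp (fun _ : β => ℝ) 1) (a : α) : pullL g hg F a = F (g a) := rfl

lemma pullL_norm_le (hg : Function.Injective g) (F : lp (fun _ : β => ℝ) 1) : ‖pullL g hg F‖ ≤ 1 * ‖F‖ := by
  rw [one_mul, ← (hasSum_norm_L1 (pullL g hg F)).tsum_eq, ← (hasSum_norm_L1 F).tsum_eq]
  exact Summable.tsum_le_tsum_of_inj g hg (fun c _ => norm_nonneg _) (fun a => le_rfl)
    ((summable_of_memL1 F).comp_injective hg) (summable_of_memL1 F)

lemma norm_extend_eq (hg : Function.Injective g) (u : α → ℝ) :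
    (fun b => ‖Function.extend g u 0 b‖) = Function.extend g (fun a => ‖u a‖) 0 := by
  funext b
  rcases em (∃ a, g a = b) with ⟨a, rfl⟩ | hb
  · rw [hg.extend_apply, hg.extend_apply]
  · rw [Function.extend_apply' _ _ _ hb, Function.extend_apply' _ _ _ hb]
    simp

/-- Pushforward (extension by zero) along an injective map, as a linear map on `ℓ¹`. -/
def pushL (hg : Function.Injective g) : lp (fun _ : α => ℝ) 1 →ₗ[ℝ] lp (fun _ : β => ℝ) 1 where
  toFun u := ⟨Function.extend g (fun a => u a) 0, memL1 (by
      rw [norm_extend_eq g hg]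
      exact (summable_extend_zero hg).2 (summable_of_memL1 u))⟩
  map_add' u v := by
    apply lp.ext; funext b
    show Function.extend g (fun a => (u + v) a) 0 b
        = Function.extend g (fun a => u a) 0 b + Function.extend g (fun a => v a) 0 b
    rcases em (∃ a, g a = b) with ⟨a, rfl⟩ | hb
    · rw [hg.extend_apply, hg.extend_apply, hg.extend_apply, lp.coeFn_add, Pi.add_apply]
    · rw [Function.extend_apply' _ _ _ hb, Function.extend_apply' _ _ _ hb,
        Function.extend_apply' _ _ _ hb]
      simp
  map_smul' c u := by
    apply lp.ext; funext b
    show Function.extend g (fun a => (c • u) a) 0 b = c • Function.extend g (fun a => u a) 0 b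
    rcases em (∃ a, g a = b) with ⟨a, rfl⟩ | hb
    · rw [hg.extend_apply, hg.extend_apply, lp.coeFn_smul, Pi.smul_apply]
    · rw [Function.extend_apply' _ _ _ hb, Function.extend_apply' _ _ _ hb]
      simp

lemma pushL_apply (hg : Function.Injective g) (u : lp (fun _ : α => ℝ) 1) (b : β) :
    pushL g hg u b = Function.extend g (fun a => u a) 0 b := rfl

lemma pushL_norm_le (hg : Function.Injective g) (u : lp (fun _ : α => ℝ) 1) : ‖pushL g hg u‖ ≤ 1 * ‖u‖ := by
  rw [one_mul]
  have h1 : HasSum (Function.extend g (fun a => ‖u a‖) 0) ‖pushL g hg u‖ := by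
    have := hasSum_norm_L1 (pushL g hg u)
    rwa [show (fun a => ‖pushL g hg u a‖)
        = Function.extend g (fun a => ‖u a‖) 0 from norm_extend_eq g hg _] at this
  have h2 : HasSum (fun a => ‖u a‖) ‖pushL g hg u‖ := (hasSum_extend_zero hg).1 h1
  exact le_of_eq (h2.unique (hasSum_norm_L1 u))

/-- Pullback along an injective map, as a continuous linear map on `ℓ¹`. -/
def pullCLM (hg : Function.Injective g) : lp (fun _ : β => ℝ) 1 →L[ℝ] lp (fun _ : α => ℝ) 1 :=
  (pullL g hg).mkContinuous 1 (pullL_norm_le g hg)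

/-- Pushforward along an injective map, as a continuous linear map on `ℓ¹`. -/
def pushCLM (hg : Function.Injective g) : lp (fun _ : α => ℝ) 1 →L[ℝ] lp (fun _ : β => ℝ) 1 :=
  (pushL g hg).mkContinuous 1 (pushL_norm_le g hg)

lemma pullCLM_apply (hg : Function.Injective g) (F : lp (fun _ : β => ℝ) 1) (a : α) : pullCLM g hg F a = F (g a) := rfl

lemma pushCLM_apply (hg : Function.Injective g) (u : lp (fun _ : α => ℝ) 1) (b : β) :
    pushCLM g hg u b = Function.extend g (fun a => u a) 0 b := rfl

lemma pullCLM_norm_le (hg : Function.Injective g) : ‖pullCLM g hg‖ ≤ 1 :=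
  LinearMap.mkContinuous_norm_le _ zero_le_one _

lemma pushCLM_norm_le (hg : Function.Injective g) : ‖pushCLM g hg‖ ≤ 1 :=
  LinearMap.mkContinuous_norm_le _ zero_le_one _

lemma pushCLM_single (hg : Function.Injective g) [DecidableEq α] [DecidableEq β] (a₀ : α) :
    pushCLM g hg (lp.single 1 a₀ (1:ℝ)) = lp.single 1 (g a₀) (1:ℝ) := by
  apply lp.ext; funext b
  rw [show (pushCLM g hg (lp.single 1 a₀ (1:ℝ))) b
      = Function.extend g (fun a => lp.single 1 a₀ (1:ℝ) a) 0 b from rfl]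
  rcases em (∃ a, g a = b) with ⟨a, rfl⟩ | hb
  · rw [hg.extend_apply, lp.single_apply, lp.single_apply]
    by_cases hay : a = a₀
    · subst hay; simp
    · rw [Pi.single_apply, Pi.single_apply, if_neg hay, if_neg (fun h => hay (hg h))]
  · rw [Function.extend_apply' _ _ _ hb, lp.single_apply, Pi.single_apply,
      if_neg (fun h => hb ⟨a₀, h.symm⟩)]
    rfl

end L1Helpers

section ExpBound

lemma norm_exp_le_of_norm_one_le {𝔸 : Type*} [NormedRing 𝔸] [NormedAlgebra ℝ 𝔸]
    [CompleteSpace 𝔸] (h1 : ‖(1:𝔸)‖ ≤ 1) (x : 𝔸) :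
    ‖NormedSpace.exp x‖ ≤ Real.exp ‖x‖ := by
  have hterm : ∀ n : ℕ, ‖((n.factorial : ℝ))⁻¹ • x ^ n‖ ≤ ‖x‖ ^ n / (n.factorial : ℝ) := by
    intro n
    rw [norm_smul, Real.norm_eq_abs, abs_of_nonneg (by positivity : (0:ℝ) ≤ ((n.factorial : ℝ))⁻¹)]
    rcases Nat.eq_zero_or_pos n with rfl | hn
    · simpa using h1
    · rw [div_eq_inv_mul]
      exact mul_le_mul_of_nonneg_left (norm_pow_le' x hn) (by positivity)
  have hsum : Summable (fun n : ℕ => ‖((n.factorial : ℝ))⁻¹ • x ^ n‖) :=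
    Summable.of_nonneg_of_le (fun n => norm_nonneg _) hterm
      (Real.summable_pow_div_factorial ‖x‖)
  have hexp : NormedSpace.exp x = ∑' n : ℕ, ((n.factorial : ℝ))⁻¹ • x ^ n := by
    rw [NormedSpace.exp_eq_tsum (𝕂 := ℝ)]
  rw [hexp]
  calc ‖∑' n : ℕ, ((n.factorial : ℝ))⁻¹ • x ^ n‖ ≤ ∑' n : ℕ, ‖((n.factorial : ℝ))⁻¹ • x ^ n‖ :=
        norm_tsum_le_tsum_norm hsum
    _ ≤ ∑' n : ℕ, ‖x‖ ^ n / (n.factorial : ℝ) :=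
        Summable.tsum_le_tsum hterm hsum (Real.summable_pow_div_factorial ‖x‖)
    _ = Real.exp ‖x‖ := by
        rw [Real.exp_eq_exp_ℝ, NormedSpace.exp_eq_tsum_div]

end ExpBound

section Laplace

lemma lap_main {X : Type} [NormedAddCommGroup X] [NormedSpace ℝ X] [CompleteSpace X]
    (Q : X →L[ℝ] X) {s : ℝ} (hs : ‖Q‖ < s) :
    LapConv Q s ∧ ‖Lop Q s‖ ≤ (s - ‖Q‖)⁻¹ := by
  set b := s - ‖Q‖ with hbdef
  have hb0 : 0 < b := sub_pos.mpr hs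
  have hcont : Continuous fun t : ℝ => Real.exp (-(s*t)) • NormedSpace.exp (t • Q) := by
    apply Continuous.smul (f := fun t : ℝ => Real.exp (-(s*t))) (g := fun t : ℝ => NormedSpace.exp (t • Q))
    · exact Real.continuous_exp.comp (continuous_const.mul continuous_id).neg
    · letI : NormedAlgebra ℚ (X →L[ℝ] X) := NormedAlgebra.restrictScalars ℚ ℝ (X →L[ℝ] X)
      exact NormedSpace.exp_continuous.comp (continuous_id.smul continuous_const)
  have hbound : ∀ t ∈ Ioi (0:ℝ),
      ‖Real.exp (-(s*t)) • NormedSpace.exp (t • Q)‖ ≤ Real.exp (-b * t) := by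
    intro t ht
    have ht0 : 0 < t := ht
    have h1 : ‖NormedSpace.exp (t • Q)‖ ≤ Real.exp (t * ‖Q‖) := by
      have h2 := norm_exp_le_of_norm_one_le (𝔸 := X →L[ℝ] X)
        (by rw [ContinuousLinearMap.one_def]; exact ContinuousLinearMap.norm_id_le) (t • Q)
      have h3 : ‖t • Q‖ = t * ‖Q‖ := by
        rw [show ‖t • Q‖ = ‖t‖ * ‖Q‖ from norm_smul t Q, Real.norm_eq_abs, abs_of_pos ht0]
      exact h2.trans_eq (congrArg Real.exp h3)
    calc ‖Real.exp (-(s*t)) • NormedSpace.exp (t • Q)‖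
        = Real.exp (-(s*t)) * ‖NormedSpace.exp (t • Q)‖ := by
          have h4 := norm_smul (Real.exp (-(s*t))) (NormedSpace.exp (t • Q))
          rw [Real.norm_eq_abs, abs_of_pos (Real.exp_pos _)] at h4
          exact h4
      _ ≤ Real.exp (-(s*t)) * Real.exp (t * ‖Q‖) :=
          mul_le_mul_of_nonneg_left h1 (Real.exp_pos _).le
      _ = Real.exp (-b * t) := by rw [← Real.exp_add, hbdef]; ring_nf
  have hint : IntegrableOn (fun t : ℝ => Real.exp (-b * t)) (Ioi 0) :=
    exp_neg_integrableOn_Ioi 0 hb0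
  haveI : SecondCountableTopologyEither ℝ (X →L[ℝ] X) := ⟨Or.inl inferInstance⟩
  have hE : (NormedSpace.expSeries ℝ (X →L[ℝ] X)).sum = NormedSpace.exp :=
    (NormedSpace.exp_eq_expSeries_sum ℝ).symm
  have hconv : LapConv Q s := by
    unfold LapConv; rw [hE]
    refine hint.mono' hcont.aestronglyMeasurable.restrict ?_
    exact (ae_restrict_iff' measurableSet_Ioi).2 (Filter.Eventually.of_forall hbound)
  refine ⟨hconv, ?_⟩
  have h1 : ‖Lop Q s‖ ≤ ∫ t in Ioi (0:ℝ), Real.exp (-b * t) := by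
    unfold Lop; rw [hE]
    refine norm_integral_le_of_norm_le hint ?_
    exact (ae_restrict_iff' measurableSet_Ioi).2 (Filter.Eventually.of_forall hbound)
  have h2 : (∫ t in Ioi (0:ℝ), Real.exp (-b * t)) = b⁻¹ := by
    have h3 := integral_comp_mul_left_Ioi (fun x => Real.exp (-x)) 0 hb0
    simp only [mul_zero, integral_exp_neg_Ioi, neg_zero, Real.exp_zero, smul_eq_mul,
      mul_one] at h3
    rw [show (fun t : ℝ => Real.exp (-b * t)) = fun t : ℝ => Real.exp (-(b * t)) by
      funext t; rw [neg_mul]]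
    exact h3
  rw [h2] at h1
  exact h1

end Laplace

section KeyIdentity

lemma small_aux {c L b : ℝ} (hc : 0 ≤ c) (hL : 0 ≤ L) (hLb : L * b ≤ 1) (hb0 : 0 < b)
    (hb : c + 1 ≤ b) : c * L < 1 := by nlinarith

lemma key_identity {E F : Type*} [NormedAddCommGroup E] [NormedSpace ℝ E]
    [NormedAddCommGroup F] [NormedSpace ℝ F]
    (γ : ℝ) (L N₁ : E →L[ℝ] E) (A : F →L[ℝ] E) (R : E →L[ℝ] F) (N₂ : F →L[ℝ] F)
    (h1 : N₁ * (1 - γ • (L * (A.comp R))) = 1)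
    (h2 : (1 - γ • ((R.comp L).comp A)) * N₂ = 1) :
    N₁ * L = L + γ • ((L.comp A).comp (N₂.comp (R.comp L))) := by
  ext v
  have h2v := ContinuousLinearMap.ext_iff.1 h2 (R (L v))
  simp only [ContinuousLinearMap.mul_apply, ContinuousLinearMap.sub_apply,
    ContinuousLinearMap.smul_apply, ContinuousLinearMap.one_apply,
    ContinuousLinearMap.coe_comp', Function.comp_apply] at h2v
  set w := N₂ (R (L v)) with hw
  have h1u := ContinuousLinearMap.ext_iff.1 h1 (L v + γ • L (A w))
  simp only [ContinuousLinearMap.mul_apply, ContinuousLinearMap.sub_apply,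
    ContinuousLinearMap.smul_apply, ContinuousLinearMap.one_apply,
    ContinuousLinearMap.coe_comp', Function.comp_apply] at h1u
  have hRu : R (L v + γ • L (A w)) = w := by
    rw [map_add, ContinuousLinearMap.map_smul, ← h2v]
    abel
  rw [hRu, add_sub_cancel_right] at h1u
  simpa only [ContinuousLinearMap.mul_apply, ContinuousLinearMap.add_apply,
    ContinuousLinearMap.smul_apply, ContinuousLinearMap.coe_comp',
    Function.comp_apply] using h1u

end KeyIdentity

section Assemble

lemma assemble {E F : Type} [NormedAddCommGroup E] [NormedSpace ℝ E] [CompleteSpace E]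
    [NormedAddCommGroup F] [NormedSpace ℝ F] [CompleteSpace F]
    (γ : ℝ) (Q D : E →L[ℝ] E) (A : F →L[ℝ] E) (R : E →L[ℝ] F)
    (hA : ‖A‖ ≤ 1) (hR : ‖R‖ ≤ 1) (hDar : D = A.comp R) {s : ℝ}
    (hs : ‖Q‖ + (1 + |γ| * (‖D‖ + 1)) < s) :
    LapConv Q s ∧
    ∃ (N₁ : E →L[ℝ] E) (N₂ : F →L[ℝ] F),
      N₁ * (1 - γ • (Lop Q s * D)) = 1 ∧ (1 - γ • (Lop Q s * D)) * N₁ = 1 ∧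
      N₂ * (1 - γ • ((R.comp (Lop Q s)).comp A)) = 1 ∧
      (1 - γ • ((R.comp (Lop Q s)).comp A)) * N₂ = 1 ∧
      N₁ * Lop Q s
        = Lop Q s + γ • (((Lop Q s).comp A).comp (N₂.comp (R.comp (Lop Q s)))) := by
  have hQs : ‖Q‖ < s := by nlinarith [abs_nonneg γ, norm_nonneg D]
  obtain ⟨hconv, hnorm⟩ := lap_main Q hQs
  refine ⟨hconv, ?_⟩
  have hb0 : (0:ℝ) < s - ‖Q‖ := sub_pos.mpr hQs
  have hb1 : 1 + |γ| * (‖D‖ + 1) < s - ‖Q‖ := by linarith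
  have hLb : ‖Lop Q s‖ * (s - ‖Q‖) ≤ 1 := by
    have h := mul_le_mul_of_nonneg_right hnorm hb0.le
    rwa [inv_mul_cancel₀ hb0.ne'] at h
  have hsmall1 : ‖γ • (Lop Q s * D)‖ < 1 := by
    have h3 := norm_smul γ (Lop Q s * D)
    rw [Real.norm_eq_abs] at h3
    have h1 : ‖γ • (Lop Q s * D)‖ ≤ (|γ| * ‖D‖) * ‖Lop Q s‖ :=
      calc ‖γ • (Lop Q s * D)‖ = |γ| * ‖Lop Q s * D‖ := h3
        _ ≤ |γ| * (‖Lop Q s‖ * ‖D‖) :=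
            mul_le_mul_of_nonneg_left (norm_mul_le _ _) (abs_nonneg γ)
        _ = (|γ| * ‖D‖) * ‖Lop Q s‖ := by ring
    refine lt_of_le_of_lt h1 (small_aux ?_ (norm_nonneg _) hLb hb0 ?_)
    · positivity
    · nlinarith [abs_nonneg γ, norm_nonneg D]
  have h00 : ‖(R.comp (Lop Q s)).comp A‖ ≤ ‖Lop Q s‖ := by
    have c1 := ContinuousLinearMap.opNorm_comp_le (R.comp (Lop Q s)) A
    have c2 := ContinuousLinearMap.opNorm_comp_le R (Lop Q s)
    nlinarith [norm_nonneg (Lop Q s), norm_nonneg A, norm_nonneg R,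
      norm_nonneg (R.comp (Lop Q s))]
  have hsmall2 : ‖γ • ((R.comp (Lop Q s)).comp A)‖ < 1 := by
    have h3 := norm_smul γ ((R.comp (Lop Q s)).comp A)
    rw [Real.norm_eq_abs] at h3
    have h1 : ‖γ • ((R.comp (Lop Q s)).comp A)‖ ≤ |γ| * ‖Lop Q s‖ := by
      rw [h3]
      exact mul_le_mul_of_nonneg_left h00 (abs_nonneg γ)
    refine lt_of_le_of_lt h1 (small_aux (abs_nonneg γ) (norm_nonneg _) hLb hb0 ?_)
    nlinarith [abs_nonneg γ, norm_nonneg D]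
  refine ⟨↑(Units.oneSub (γ • (Lop Q s * D)) hsmall1)⁻¹,
    ↑(Units.oneSub (γ • ((R.comp (Lop Q s)).comp A)) hsmall2)⁻¹,
    (Units.oneSub (γ • (Lop Q s * D)) hsmall1).inv_mul,
    (Units.oneSub (γ • (Lop Q s * D)) hsmall1).mul_inv,
    (Units.oneSub _ hsmall2).inv_mul, (Units.oneSub _ hsmall2).mul_inv, ?_⟩
  have h1 : (↑(Units.oneSub (γ • (Lop Q s * D)) hsmall1)⁻¹ : E →L[ℝ] E)
      * (1 - γ • (Lop Q s * (A.comp R))) = 1 := by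
    rw [← hDar]
    exact (Units.oneSub (γ • (Lop Q s * D)) hsmall1).inv_mul
  exact key_identity γ (Lop Q s) _ A R _ h1 (Units.oneSub _ hsmall2).mul_inv

end Assemble

/-- **Remark 1.1(b)** of Tracy–Widom (with `γ = α - β`).  For every `γ ∈ ℝ` and `k = m+1 ≥ 1`,
for all sufficiently large `s` the operators `I - γ L_k(s) δ` on `E_k` and
`I - γ L⁰_{k-1}(s)` on `ℓ¹(X_{k-1}⁺)` are boundedly invertible and
`(I - γ L_k(s) δ)⁻¹ L_k(s) = L_k(s) + γ L⁰_{k,k-1}(s) (I - γ L⁰_{k-1}(s))⁻¹ L⁰_{k-1,k}(s)`. -/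
theorem tracy_widom_remark1_1b
    (p q γ : ℝ) (hp : 0 ≤ p) (hq : 0 ≤ q) (hpq : p + q = 1) (m : ℕ)
    -- the k-particle generator, k = m+1 ≥ 1
    (Q : En (m+1) →L[ℝ] En (m+1))
    (hQ : ∀ (u : En (m+1)) (x : Conf (m+1)), Q u x = Qact p q (fun z => u z) x)
    -- the operator δ on E_k
    (D : En (m+1) →L[ℝ] En (m+1))
    (hD : ∀ (u : En (m+1)) (x : Conf (m+1)), D u x = Dact (fun z => u z) x) :
    ∃ s₀ : ℝ, 0 ≤ s₀ ∧ ∀ s : ℝ, s₀ < s →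
      -- the Bochner integral defining L_k(s) converges
      LapConv Q s ∧
      -- the operators with kernels φ̂_k((0,x),(0,y);s), φ̂_k(x,(0,y);s), φ̂_k((0,x),y;s)
      ∃ (L00 : Ep m →L[ℝ] Ep m) (L10 : Ep m →L[ℝ] En (m+1)) (L01 : En (m+1) →L[ℝ] Ep m),
        (∀ (y x : ConfP m),
          L00 (lp.single 1 y (1:ℝ)) x = Lop Q s (lp.single 1 (cons0 y) (1:ℝ)) (cons0 x)) ∧
        (∀ (y : ConfP m) (x : Conf (m+1)),
          L10 (lp.single 1 y (1:ℝ)) x = Lop Q s (lp.single 1 (cons0 y) (1:ℝ)) x) ∧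
        (∀ (y : Conf (m+1)) (x : ConfP m),
          L01 (lp.single 1 y (1:ℝ)) x = Lop Q s (lp.single 1 y (1:ℝ)) (cons0 x)) ∧
        -- bounded invertibility of I - γ L_k(s) δ and I - γ L⁰_{k-1}(s) …
        ∃ (N₁ : En (m+1) →L[ℝ] En (m+1)) (N₂ : Ep m →L[ℝ] Ep m),
          N₁ * (1 - γ • (Lop Q s * D)) = 1 ∧ (1 - γ • (Lop Q s * D)) * N₁ = 1 ∧
          N₂ * (1 - γ • L00) = 1 ∧ (1 - γ • L00) * N₂ = 1 ∧
          -- … and the identity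
          N₁ * Lop Q s = Lop Q s + γ • (L10.comp (N₂.comp L01)) := by
  classical
  -- injectivity of `cons0`
  have hg : Function.Injective (cons0 (n := m)) := by
    intro a b hab
    apply Subtype.ext
    apply Subtype.ext
    funext i
    have h := congrArg (fun z : Conf (m+1) => z.1 i.succ) hab
    simpa [cons0, Fin.cons_succ] using h
  -- range characterization of `cons0`
  have hrange : ∀ x : Conf (m+1), x.1 0 = 0 → ∃ a : ConfP m, cons0 a = x := by
    intro x hx
    refine ⟨⟨confTail x, fun h => ?_⟩, ?_⟩
    · have h2 : x.1 0 < x.1 (Fin.succ ⟨0, h⟩) := x.2 (Fin.succ_pos _)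
      rw [hx] at h2
      exact h2
    · apply Subtype.ext
      funext i
      induction i using Fin.cases with
      | zero => simpa [cons0] using hx.symm
      | succ j => simp [cons0, confTail]
  -- D = A ∘ R
  have hDar : D = (pushCLM (cons0 (n := m)) hg).comp (pullCLM (cons0 (n := m)) hg) := by
    apply ContinuousLinearMap.ext
    intro F
    apply lp.ext
    funext x
    have hcomp : ((pushCLM (cons0 (n := m)) hg).comp (pullCLM (cons0 (n := m)) hg)) F x
        = Function.extend (cons0 (n := m)) (fun a => F (cons0 a)) 0 x := rfl
    rw [hD F x, hcomp]
    by_cases hx : x.1 0 = 0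
    · obtain ⟨a, rfl⟩ := hrange x hx
      rw [hg.extend_apply]
      unfold Dact ind
      rw [if_pos ⟨Nat.succ_pos m, hx⟩, one_mul]
    · rw [Function.extend_apply' _ _ _ (fun hex => hx (by obtain ⟨a, ha⟩ := hex; rw [← ha]; rfl))]
      unfold Dact ind
      rw [if_neg (by rintro ⟨h, h0⟩; exact hx h0), zero_mul]
      rfl
  refine ⟨‖Q‖ + (1 + |γ| * (‖D‖ + 1)), by positivity, ?_⟩
  intro s hs
  obtain ⟨hconv, N₁, N₂, e1, e2, e3, e4, e5⟩ :=
    assemble γ Q D (pushCLM (cons0 (n := m)) hg) (pullCLM (cons0 (n := m)) hg)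
      (pushCLM_norm_le _ hg) (pullCLM_norm_le _ hg) hDar hs
  refine ⟨hconv,
    ((pullCLM (cons0 (n := m)) hg).comp (Lop Q s)).comp (pushCLM (cons0 (n := m)) hg),
    (Lop Q s).comp (pushCLM (cons0 (n := m)) hg),
    (pullCLM (cons0 (n := m)) hg).comp (Lop Q s), ?_, ?_, ?_,
    N₁, N₂, e1, e2, e3, e4, e5⟩
  · intro y x
    rw [ContinuousLinearMap.comp_apply, ContinuousLinearMap.comp_apply,
      pushCLM_single _ hg y]
    rfl
  · intro y x
    rw [ContinuousLinearMap.comp_apply, pushCLM_single _ hg y]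
  · intro y x
    rw [ContinuousLinearMap.comp_apply]
    rfl
end
end

section
/- The function u satisfies u(x,0) = 1 if x = y and u(x,0) = 0 otherwise, and for every integer x ≥ 0 the map t ↦ u(x,t) is differentiable on [0,∞) with ∂_t u(x,t) = p·u(x−1,t) + q·u(x+1,t) − u(x,t) for all x ≥ 1, and ∂_t u(0,t) = q·u(1,t) − p·u(0,t). (Thus the contour-integral formula gives the transition probability of single-particle ASEP on Z^+ started at y.) -/
open Set Metric
noncomputable section

lemma hasDerivAt_circleIntegral_exp {f e : ℂ → ℂ} {R : ℝ} (hR : 0 < R)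
    (hf : ContinuousOn f (sphere (0:ℂ) R)) (he : ContinuousOn e (sphere (0:ℂ) R)) (t : ℝ) :
    HasDerivAt (fun t' : ℝ => ∮ ξ in C(0, R), f ξ * Complex.exp (e ξ * (t':ℂ)))
      (∮ ξ in C(0, R), f ξ * e ξ * Complex.exp (e ξ * (t:ℂ))) t := by
  have hcm : ∀ θ : ℝ, circleMap 0 R θ ∈ sphere (0:ℂ) R := circleMap_mem_sphere 0 hR.le
  have hfc : Continuous fun θ : ℝ => f (circleMap 0 R θ) :=
    hf.comp_continuous (continuous_circleMap 0 R) hcm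
  have hec : Continuous fun θ : ℝ => e (circleMap 0 R θ) :=
    he.comp_continuous (continuous_circleMap 0 R) hcm
  have hdc : Continuous (fun θ : ℝ => deriv (circleMap 0 R) θ) := by
    simp only [deriv_circleMap]; exact (continuous_circleMap 0 R).mul continuous_const
  obtain ⟨Mf, hMf⟩ := (isCompact_sphere (0:ℂ) R).exists_bound_of_continuousOn hf
  obtain ⟨Me, hMe⟩ := (isCompact_sphere (0:ℂ) R).exists_bound_of_continuousOn he
  have hMe0 : 0 ≤ Me := le_trans (norm_nonneg _) (hMe _ (hcm 0))
  have hMf0 : 0 ≤ Mf := le_trans (norm_nonneg _) (hMf _ (hcm 0))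
  have hGcont : ∀ t' : ℝ, Continuous (fun θ : ℝ => deriv (circleMap 0 R) θ •
      (f (circleMap 0 R θ) * Complex.exp (e (circleMap 0 R θ) * (t':ℂ)))) := fun t' =>
    hdc.smul (hfc.mul ((hec.mul continuous_const).cexp))
  have hG'cont : ∀ t' : ℝ, Continuous (fun θ : ℝ => deriv (circleMap 0 R) θ •
      (f (circleMap 0 R θ) * e (circleMap 0 R θ) *
        Complex.exp (e (circleMap 0 R θ) * (t':ℂ)))) := fun t' =>
    hdc.smul ((hfc.mul hec).mul ((hec.mul continuous_const).cexp))
  have key := intervalIntegral.hasDerivAt_integral_of_dominated_loc_of_deriv_le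
    (𝕜 := ℝ) (F := fun (t' : ℝ) (θ : ℝ) => deriv (circleMap 0 R) θ •
      (f (circleMap 0 R θ) * Complex.exp (e (circleMap 0 R θ) * (t':ℂ))))
    (F' := fun (t' : ℝ) (θ : ℝ) => deriv (circleMap 0 R) θ •
      (f (circleMap 0 R θ) * e (circleMap 0 R θ) *
        Complex.exp (e (circleMap 0 R θ) * (t':ℂ))))
    (x₀ := t) (a := 0) (b := 2 * Real.pi)
    (bound := fun _ => R * (Mf * (Me * Real.exp (Me * (|t| + 1)))))
    (μ := MeasureTheory.volume) (Metric.ball_mem_nhds t one_pos)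
    (Filter.Eventually.of_forall fun t' => (hGcont t').aestronglyMeasurable)
    ((hGcont t).intervalIntegrable _ _)
    ((hG'cont t).aestronglyMeasurable)
    ?_ (intervalIntegrable_const) ?_
  · simpa only [circleIntegral] using key.2
  · refine Filter.Eventually.of_forall fun θ _ t' ht' => ?_
    have h1 : ‖deriv (circleMap 0 R) θ‖ = R := by
      simp [deriv_circleMap, norm_circleMap_zero, abs_of_pos hR]
    have h2 : ‖Complex.exp (e (circleMap 0 R θ) * (t':ℂ))‖ ≤ Real.exp (Me * (|t| + 1)) := by
      rw [Complex.norm_exp]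
      apply Real.exp_le_exp.2
      have hre : (e (circleMap 0 R θ) * (t':ℂ)).re = (e (circleMap 0 R θ)).re * t' := by
        simp [Complex.mul_re]
      rw [hre]
      have hb1 : |(e (circleMap 0 R θ)).re| ≤ Me :=
        le_trans (Complex.abs_re_le_norm _) (hMe _ (hcm θ))
      have hb2 : |t'| ≤ |t| + 1 := by
        have h5 := mem_ball_iff_norm.1 ht'
        have h6 : |t' - t| ≤ 1 := le_of_lt (by simpa [Real.norm_eq_abs] using h5)
        have : |t'| ≤ |t| + |t' - t| := by
          have := abs_add_le t (t' - t); simpa using this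
        linarith
      calc (e (circleMap 0 R θ)).re * t' ≤ |(e (circleMap 0 R θ)).re * t'| := le_abs_self _
        _ = |(e (circleMap 0 R θ)).re| * |t'| := abs_mul _ _
        _ ≤ Me * (|t| + 1) := mul_le_mul hb1 hb2 (abs_nonneg _) hMe0
    have h3 : ‖f (circleMap 0 R θ)‖ ≤ Mf := hMf _ (hcm θ)
    have h4 : ‖e (circleMap 0 R θ)‖ ≤ Me := hMe _ (hcm θ)
    calc ‖deriv (circleMap 0 R) θ • (f (circleMap 0 R θ) * e (circleMap 0 R θ) *
            Complex.exp (e (circleMap 0 R θ) * (t':ℂ)))‖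
        = ‖deriv (circleMap 0 R) θ‖ * (‖f (circleMap 0 R θ)‖ * (‖e (circleMap 0 R θ)‖ *
          ‖Complex.exp (e (circleMap 0 R θ) * (t':ℂ))‖)) := by
          simp [norm_smul, mul_assoc]
      _ ≤ R * (Mf * (Me * Real.exp (Me * (|t| + 1)))) := by
          rw [h1]; gcongr
  · refine Filter.Eventually.of_forall fun θ _ t' _ => ?_
    have hbase : HasDerivAt (fun z : ℂ => Complex.exp (e (circleMap 0 R θ) * z))
        (Complex.exp (e (circleMap 0 R θ) * (t':ℂ)) * e (circleMap 0 R θ)) (t':ℂ) := by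
      simpa using ((hasDerivAt_id (t':ℂ)).const_mul (e (circleMap 0 R θ))).cexp
    have hd := (hbase.comp_ofReal.const_mul (f (circleMap 0 R θ))).const_smul
        (deriv (circleMap 0 R) θ)
    convert hd using 1
    · funext x; simp only [Pi.smul_apply, smul_eq_mul]
    · congr 1; ring

def Fa (p q : ℝ) (y x : ℕ) (ξ : ℂ) : ℂ :=
  ξ ^ ((x : ℤ) - (y : ℤ) - 1)
    + (((p / q : ℝ) : ℂ) - ξ) / (1 - ξ) * ((p / q : ℝ) : ℂ) ^ x
        * ξ ^ (-(x : ℤ) - (y : ℤ) - 2)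

def Ea (p q : ℝ) (ξ : ℂ) : ℂ := (p : ℂ) * ξ⁻¹ + (q : ℂ) * ξ - 1

lemma key1 (p q : ℝ) (hq : q ≠ 0) (y : ℕ) {ξ : ℂ} (h0 : ξ ≠ 0) (h1 : ξ ≠ 1) (m : ℕ) :
    (p : ℂ) * Fa p q y m ξ + (q : ℂ) * Fa p q y (m + 2) ξ - Fa p q y (m + 1) ξ
      = Fa p q y (m + 1) ξ * Ea p q ξ := by
  have h1' : (1 : ℂ) - ξ ≠ 0 := sub_ne_zero.2 (Ne.symm h1)
  have hq' : (q : ℂ) ≠ 0 := by exact_mod_cast hq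
  have hp : (p : ℂ) = (q : ℂ) * ((p / q : ℝ) : ℂ) := by
    push_cast; field_simp
  unfold Fa Ea
  have E2 : ξ ^ (((m + 1 : ℕ) : ℤ) - (y : ℤ) - 1) = ξ ^ ((m : ℤ) - (y : ℤ) - 1) * ξ := by
    rw [show (((m + 1 : ℕ) : ℤ) - (y : ℤ) - 1) = ((m : ℤ) - (y : ℤ) - 1) + 1 by push_cast; ring,
      zpow_add_one₀ h0]
  have E3 : ξ ^ (((m + 2 : ℕ) : ℤ) - (y : ℤ) - 1) = ξ ^ ((m : ℤ) - (y : ℤ) - 1) * ξ * ξ := by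
    rw [show (((m + 2 : ℕ) : ℤ) - (y : ℤ) - 1) = (((m:ℤ) - (y:ℤ) - 1) + 1) + 1 by push_cast; ring,
      zpow_add_one₀ h0, zpow_add_one₀ h0]
  have E4 : ξ ^ (-(m : ℤ) - (y : ℤ) - 2)
      = ξ ^ (-((m + 2 : ℕ) : ℤ) - (y : ℤ) - 2) * ξ * ξ := by
    rw [show (-(m : ℤ) - (y : ℤ) - 2) = ((-((m + 2:ℕ) : ℤ) - (y:ℤ) - 2) + 1) + 1
        by push_cast; ring, zpow_add_one₀ h0, zpow_add_one₀ h0]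
  have E5 : ξ ^ (-((m + 1 : ℕ) : ℤ) - (y : ℤ) - 2)
      = ξ ^ (-((m + 2 : ℕ) : ℤ) - (y : ℤ) - 2) * ξ := by
    rw [show (-((m + 1:ℕ) : ℤ) - (y : ℤ) - 2) = (-((m + 2:ℕ) : ℤ) - (y:ℤ) - 2) + 1
        by push_cast; ring, zpow_add_one₀ h0]
  rw [E2, E3, E4, E5, pow_succ, pow_succ, hp]
  set τ : ℂ := ((p / q : ℝ) : ℂ)
  set A := ξ ^ ((m : ℤ) - (y : ℤ) - 1)
  set B := ξ ^ (-((m + 2 : ℕ) : ℤ) - (y : ℤ) - 2)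
  set S := τ ^ m
  field_simp
  ring

lemma key0 (p q : ℝ) (hq : q ≠ 0) (hpq : p + q = 1) (y : ℕ) {ξ : ℂ} (h0 : ξ ≠ 0) (h1 : ξ ≠ 1) :
    (q : ℂ) * Fa p q y 1 ξ - (p : ℂ) * Fa p q y 0 ξ = Fa p q y 0 ξ * Ea p q ξ := by
  have h1' : (1 : ℂ) - ξ ≠ 0 := sub_ne_zero.2 (Ne.symm h1)
  have hq' : (q : ℂ) ≠ 0 := by exact_mod_cast hq
  have hp : (p : ℂ) = (q : ℂ) * ((p / q : ℝ) : ℂ) := by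
    push_cast; field_simp
  unfold Fa Ea
  have E1 : ξ ^ (((0 : ℕ) : ℤ) - (y : ℤ) - 1) = ξ ^ (-((0:ℕ) : ℤ) - (y : ℤ) - 2) * ξ := by
    rw [show (((0:ℕ) : ℤ) - (y : ℤ) - 1) = (-((0:ℕ) : ℤ) - (y:ℤ) - 2) + 1 by push_cast; ring,
      zpow_add_one₀ h0]
  have E2 : ξ ^ (((1 : ℕ) : ℤ) - (y : ℤ) - 1) = ξ ^ (-((0:ℕ) : ℤ) - (y : ℤ) - 2) * ξ * ξ := by
    rw [show (((1:ℕ) : ℤ) - (y : ℤ) - 1) = ((-((0:ℕ) : ℤ) - (y:ℤ) - 2) + 1) + 1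
        by push_cast; ring, zpow_add_one₀ h0, zpow_add_one₀ h0]
  have E3 : ξ ^ (-((1 : ℕ) : ℤ) - (y : ℤ) - 2) = ξ ^ (-((0:ℕ) : ℤ) - (y : ℤ) - 2) * ξ⁻¹ := by
    rw [show (-((1:ℕ) : ℤ) - (y : ℤ) - 2) = (-((0:ℕ) : ℤ) - (y:ℤ) - 2) - 1 by push_cast; ring,
      zpow_sub_one₀ h0]
  rw [E1, E2, E3, pow_one, pow_zero, hp]
  set τ : ℂ := ((p / q : ℝ) : ℂ) with hτdef
  have hrel : (q : ℂ) * τ = 1 - (q : ℂ) := by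
    rw [← hp, show (p : ℝ) = 1 - q by linarith]; push_cast; ring
  set B := ξ ^ (-((0 : ℕ) : ℤ) - (y : ℤ) - 2)
  field_simp
  linear_combination (B*ξ^2*(1-ξ)^2*(ξ^2 - τ)
    + B*ξ*(-τ + ξ*τ + ξ^2 - 2*ξ^2*τ - ξ^3 + ξ^3*τ + 2*ξ^4 - ξ^5)) * hrel

lemma sphere_props {R : ℝ} (hR1 : 1 < R) {ξ : ℂ} (hξ : ξ ∈ sphere (0:ℂ) R) :
    ξ ≠ 0 ∧ ξ ≠ 1 := by
  rw [mem_sphere_zero_iff_norm] at hξ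
  constructor
  · intro h; subst h; simp at hξ; linarith
  · intro h; subst h; simp at hξ; linarith

lemma circleIntegral_add' {f g : ℂ → ℂ} {c : ℂ} {R : ℝ} (hf : CircleIntegrable f c R)
    (hg : CircleIntegrable g c R) :
    (∮ z in C(c, R), (f z + g z)) = (∮ z in C(c, R), f z) + ∮ z in C(c, R), g z := by
  simp only [circleIntegral, smul_add]
  exact intervalIntegral.integral_add hf.out hg.out

lemma circleIntegral_finset_sum {ι : Type*} (s : Finset ι) {c : ℂ} {R : ℝ} (f : ι → ℂ → ℂ)
    (h : ∀ i ∈ s, CircleIntegrable (f i) c R) :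
    (∮ z in C(c, R), (∑ i ∈ s, f i z)) = ∑ i ∈ s, ∮ z in C(c, R), f i z := by
  simp only [circleIntegral, Finset.smul_sum]
  exact intervalIntegral.integral_finset_sum fun i hi => (h i hi).out

lemma geom_aux (n : ℕ) {ξ : ℂ} (h0 : ξ ≠ 0) :
    (1 - ξ) * ∑ k ∈ Finset.range n, ξ ^ (-(k:ℤ) - 1) = ξ ^ (-(n:ℤ)) - 1 := by
  induction n with
  | zero => simp
  | succ n ih =>
    rw [Finset.sum_range_succ, mul_add, ih]
    rw [show (-((n+1:ℕ):ℤ)) = (-(n:ℤ)) - 1 by push_cast; ring, zpow_sub_one₀ h0]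
    set W := ξ ^ (-(n:ℤ))
    field_simp
    ring

lemma decomp (τ : ℂ) (n : ℕ) {ξ : ℂ} (h0 : ξ ≠ 0) (h1 : ξ ≠ 1) :
    (τ - ξ) / (1 - ξ) * ξ ^ (-(n:ℤ))
      = ξ ^ (-(n:ℤ)) + (τ - 1) * ∑ k ∈ Finset.range n, ξ ^ (-(k:ℤ) - 1)
        + (τ - 1) * (1 - ξ)⁻¹ := by
  have h1' : (1:ℂ) - ξ ≠ 0 := sub_ne_zero.2 (Ne.symm h1)
  have hg := geom_aux n h0 (ξ := ξ)
  have hS : ∑ k ∈ Finset.range n, ξ ^ (-(k:ℤ) - 1) = (ξ ^ (-(n:ℤ)) - 1) * (1 - ξ)⁻¹ := by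
    rw [← div_eq_mul_inv]
    rw [eq_div_iff h1']
    rw [mul_comm]
    exact hg
  rw [hS]
  set W := ξ ^ (-(n:ℤ))
  field_simp
  ring

lemma zpow_integral_zero {R : ℝ} (hR0 : 0 < R) {n : ℤ} (hn : n ≠ -1) :
    (∮ ξ in C(0, R), ξ ^ n) = 0 := by
  refine Eq.trans ?_ (circleIntegral.integral_sub_zpow_of_ne hn 0 0 R)
  exact circleIntegral.integral_congr hR0.le fun ξ _ => by rw [sub_zero]

lemma zpow_neg_one_integral {R : ℝ} (hR0 : 0 < R) :
    (∮ ξ in C(0, R), ξ ^ (-1 : ℤ)) = 2 * Real.pi * Complex.I := by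
  refine Eq.trans ?_ (circleIntegral.integral_sub_inv_of_mem_ball (mem_ball_self hR0 (x := (0:ℂ))))
  exact circleIntegral.integral_congr hR0.le fun ξ _ => by rw [sub_zero, zpow_neg_one]

lemma one_sub_inv_integral {R : ℝ} (hR1 : 1 < R) :
    (∮ ξ in C(0, R), (1 - ξ)⁻¹) = -(2 * Real.pi * Complex.I) := by
  have hR0 : (0:ℝ) < R := lt_trans one_pos hR1
  have h1 : (1:ℂ) ∈ ball (0:ℂ) R := by
    rw [mem_ball_zero_iff]; simpa using hR1
  have e1 : (∮ ξ in C(0, R), (1 - ξ)⁻¹) = ∮ ξ in C(0, R), (-1 : ℂ) * (ξ - 1)⁻¹ := by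
    refine circleIntegral.integral_congr hR0.le fun ξ _ => ?_
    rw [show (1 - ξ) = -(ξ - 1) by ring, inv_neg]; ring
  rw [e1, circleIntegral.integral_const_mul, circleIntegral.integral_sub_inv_of_mem_ball h1]
  ring

lemma second_integral_zero (τ T : ℂ) {R : ℝ} (hR1 : 1 < R) (n : ℕ) (hn : 2 ≤ n) :
    (∮ ξ in C(0, R), (τ - ξ) / (1 - ξ) * T * ξ ^ (-(n:ℤ))) = 0 := by
  have hR0 : (0:ℝ) < R := lt_trans one_pos hR1
  have hzpow : ∀ m : ℤ, ContinuousOn (fun ξ : ℂ => ξ ^ m) (sphere (0:ℂ) R) := fun m =>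
    (continuousOn_id (s := sphere (0:ℂ) R)).zpow₀ m fun ξ hξ => Or.inl (sphere_props hR1 hξ).1
  have c1 : ContinuousOn (fun ξ : ℂ => T * ξ ^ (-(n:ℤ))) (sphere (0:ℂ) R) :=
    continuousOn_const.mul (hzpow _)
  have c2 : ContinuousOn (fun ξ : ℂ => (τ - 1) * T * ∑ k ∈ Finset.range n, ξ ^ (-(k:ℤ) - 1))
      (sphere (0:ℂ) R) := by
    apply continuousOn_const.mul
    apply continuousOn_finset_sum
    intro k _
    exact hzpow _
  have c3 : ContinuousOn (fun ξ : ℂ => (τ - 1) * T * (1 - ξ)⁻¹) (sphere (0:ℂ) R) := by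
    apply continuousOn_const.mul
    apply ContinuousOn.inv₀ (continuousOn_const.sub continuousOn_id)
    exact fun ξ hξ => sub_ne_zero.2 (Ne.symm (sphere_props hR1 hξ).2)
  have e0 : (∮ ξ in C(0, R), (τ - ξ) / (1 - ξ) * T * ξ ^ (-(n:ℤ)))
      = ∮ ξ in C(0, R), (T * ξ ^ (-(n:ℤ))
          + (τ - 1) * T * ∑ k ∈ Finset.range n, ξ ^ (-(k:ℤ) - 1)
          + (τ - 1) * T * (1 - ξ)⁻¹) := by
    refine circleIntegral.integral_congr hR0.le fun ξ hξ => ?_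
    obtain ⟨h0, h1⟩ := sphere_props hR1 hξ
    have hd := decomp τ n h0 h1
    calc (τ - ξ) / (1 - ξ) * T * ξ ^ (-(n:ℤ))
        = T * ((τ - ξ) / (1 - ξ) * ξ ^ (-(n:ℤ))) := by ring
      _ = T * (ξ ^ (-(n:ℤ)) + (τ - 1) * ∑ k ∈ Finset.range n, ξ ^ (-(k:ℤ) - 1)
            + (τ - 1) * (1 - ξ)⁻¹) := by rw [hd]
      _ = _ := by ring
  rw [e0]
  rw [circleIntegral_add' ((c1.fun_add c2).circleIntegrable hR0.le) (c3.circleIntegrable hR0.le)]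
  rw [circleIntegral_add' (c1.circleIntegrable hR0.le) (c2.circleIntegrable hR0.le)]
  rw [circleIntegral.integral_const_mul, circleIntegral.integral_const_mul,
    circleIntegral.integral_const_mul]
  rw [zpow_integral_zero hR0 (by omega)]
  rw [circleIntegral_finset_sum (Finset.range n) (fun k ξ => ξ ^ (-(k:ℤ) - 1))
    (fun k _ => (hzpow (-(k:ℤ) - 1)).circleIntegrable hR0.le)]
  have hsum : ∑ k ∈ Finset.range n, (∮ ξ in C(0, R), ξ ^ (-(k:ℤ) - 1))
      = 2 * Real.pi * Complex.I := by
    rw [Finset.sum_eq_single_of_mem 0 (Finset.mem_range.2 (by omega))]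
    · simpa using zpow_neg_one_integral hR0
    · intro k _ hk
      exact zpow_integral_zero hR0 (by omega)
  rw [hsum, one_sub_inv_integral hR1]
  ring

lemma FaCont (p q : ℝ) (y x : ℕ) {R : ℝ} (hR1 : 1 < R) :
    ContinuousOn (Fa p q y x) (sphere (0:ℂ) R) := by
  have hzpow : ∀ m : ℤ, ContinuousOn (fun ξ : ℂ => ξ ^ m) (sphere (0:ℂ) R) := fun m =>
    (continuousOn_id (s := sphere (0:ℂ) R)).zpow₀ m fun ξ hξ => Or.inl (sphere_props hR1 hξ).1
  unfold Fa
  refine (hzpow _).add (ContinuousOn.mul (ContinuousOn.mul ?_ continuousOn_const) (hzpow _))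
  exact (continuousOn_const.sub continuousOn_id).div (continuousOn_const.sub continuousOn_id)
    fun ξ hξ => sub_ne_zero.2 (Ne.symm (sphere_props hR1 hξ).2)

lemma EaCont (p q : ℝ) {R : ℝ} (hR1 : 1 < R) :
    ContinuousOn (Ea p q) (sphere (0:ℂ) R) := by
  unfold Ea
  exact ((continuousOn_const.mul ((continuousOn_id).inv₀
      fun ξ hξ => (sphere_props hR1 hξ).1)).add
    (continuousOn_const.mul continuousOn_id)).sub continuousOn_const


/-- The contour-integral formula for the single-particle ASEP transition probability on
`ℤ⁺`, started at `y`: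
`u(x,t) = (1/2πi) ∮_{|ξ|=R} [ξ^{x-y-1} + ((τ-ξ)/(1-ξ)) τ^x ξ^{-x-y-2}] e^{ε(ξ)t} dξ`,
where `τ = p/q` and `ε(ξ) = pξ⁻¹ + qξ - 1`. -/
def uASEP (p q : ℝ) (y : ℕ) (R : ℝ) (x : ℕ) (t : ℝ) : ℂ :=
  (2 * Real.pi * Complex.I)⁻¹ *
    ∮ ξ in C(0, R),
      (ξ ^ ((x : ℤ) - (y : ℤ) - 1)
        + (((p / q : ℝ) : ℂ) - ξ) / (1 - ξ) * ((p / q : ℝ) : ℂ) ^ x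
            * ξ ^ (-(x : ℤ) - (y : ℤ) - 2))
      * Complex.exp (((p : ℂ) * ξ⁻¹ + (q : ℂ) * ξ - 1) * (t : ℂ))

lemma uASEP_eq (p q : ℝ) (y : ℕ) (R : ℝ) (x : ℕ) (t : ℝ) :
    uASEP p q y R x t = (2 * Real.pi * Complex.I)⁻¹ *
      ∮ ξ in C(0, R), Fa p q y x ξ * Complex.exp (Ea p q ξ * (t:ℂ)) := rfl

/-- The contour-integral formula solves the Kolmogorov equations of single-particle ASEP on
`ℤ⁺` (no boundary injection/ejection) with initial condition a particle at `y`: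
`u(x,0) = δ_{x,y}`, and on `[0,∞)`,
`∂ₜu(x,t) = p u(x-1,t) + q u(x+1,t) - u(x,t)` for `x ≥ 1`, while
`∂ₜu(0,t) = q u(1,t) - p u(0,t)`. -/
theorem uASEP_solves_kolmogorov
    (p q : ℝ) (hp : 0 < p) (hq : 0 < q) (hpq : p + q = 1)
    (y : ℕ) (R : ℝ) (hR : max 1 (p / q) < R) :
    (∀ x : ℕ, uASEP p q y R x 0 = if x = y then 1 else 0) ∧
    (∀ t ∈ Ici (0:ℝ), ∀ x : ℕ, 1 ≤ x →
      HasDerivWithinAt (fun t' => uASEP p q y R x t')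
        ((p : ℂ) * uASEP p q y R (x - 1) t + (q : ℂ) * uASEP p q y R (x + 1) t
          - uASEP p q y R x t) (Ici 0) t) ∧
    (∀ t ∈ Ici (0:ℝ),
      HasDerivWithinAt (fun t' => uASEP p q y R 0 t')
        ((q : ℂ) * uASEP p q y R 1 t - (p : ℂ) * uASEP p q y R 0 t) (Ici 0) t) := by
  have hR1 : (1:ℝ) < R := lt_of_le_of_lt (le_max_left _ _) hR
  have hR0 : (0:ℝ) < R := lt_trans one_pos hR1
  have hq0 : q ≠ 0 := ne_of_gt hq
  have h2pi : (2 * Real.pi * Complex.I : ℂ) ≠ 0 := by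
    simp [Real.pi_ne_zero, Complex.I_ne_zero]
  have hzpow : ∀ m : ℤ, ContinuousOn (fun ξ : ℂ => ξ ^ m) (sphere (0:ℂ) R) := fun m =>
    (continuousOn_id (s := sphere (0:ℂ) R)).zpow₀ m fun ξ hξ => Or.inl (sphere_props hR1 hξ).1
  refine ⟨?_, ?_, ?_⟩
  · -- initial condition
    intro x
    rw [uASEP_eq]
    have e1 : (∮ ξ in C(0,R), Fa p q y x ξ * Complex.exp (Ea p q ξ * ((0:ℝ):ℂ)))
        = ∮ ξ in C(0,R), Fa p q y x ξ := by
      refine circleIntegral.integral_congr hR0.le fun ξ _ => ?_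
      simp
    rw [e1]
    have csecond : ContinuousOn (fun ξ : ℂ =>
        (((p/q:ℝ):ℂ) - ξ)/(1-ξ) * ((p/q:ℝ):ℂ)^x * ξ^(-(x:ℤ)-(y:ℤ)-2)) (sphere (0:ℂ) R) := by
      refine ContinuousOn.mul (ContinuousOn.mul ?_ continuousOn_const) (hzpow _)
      exact (continuousOn_const.sub continuousOn_id).div (continuousOn_const.sub continuousOn_id)
        fun ξ hξ => sub_ne_zero.2 (Ne.symm (sphere_props hR1 hξ).2)
    unfold Fa
    rw [circleIntegral_add' ((hzpow _).circleIntegrable hR0.le)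
      (csecond.circleIntegrable hR0.le)]
    have e3 : (∮ ξ in C(0,R),
        (((p/q:ℝ):ℂ) - ξ)/(1-ξ) * ((p/q:ℝ):ℂ)^x * ξ^(-(x:ℤ)-(y:ℤ)-2)) = 0 := by
      rw [show (-(x:ℤ)-(y:ℤ)-2) = -((x+y+2:ℕ):ℤ) by push_cast; ring]
      exact second_integral_zero _ _ hR1 (x+y+2) (by omega)
    rw [e3, add_zero]
    by_cases hxy : x = y
    · subst hxy
      rw [show ((x:ℤ)-(x:ℤ)-1) = (-1:ℤ) by ring, zpow_neg_one_integral hR0, if_pos rfl,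
        inv_mul_cancel₀ h2pi]
    · rw [zpow_integral_zero hR0 (fun hc => hxy (by omega)), if_neg hxy, mul_zero]
  · -- interior equations
    intro t ht x hx
    obtain ⟨m, rfl⟩ : ∃ m, x = m + 1 := ⟨x - 1, (Nat.succ_pred_eq_of_pos hx).symm⟩
    simp only [uASEP_eq, Nat.add_sub_cancel]
    have hder := (hasDerivAt_circleIntegral_exp hR0 (FaCont p q y (m+1) hR1)
      (EaCont p q hR1) t).const_mul ((2 * Real.pi * Complex.I : ℂ))⁻¹
    have hc : ∀ z : ℕ, ContinuousOn
        (fun ξ => Fa p q y z ξ * Complex.exp (Ea p q ξ * (t:ℂ))) (sphere (0:ℂ) R) := fun z =>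
      (FaCont p q y z hR1).mul (((EaCont p q hR1).mul continuousOn_const).cexp)
    have hval : (∮ ξ in C(0,R), Fa p q y (m+1) ξ * Ea p q ξ * Complex.exp (Ea p q ξ * (t:ℂ)))
        = (p:ℂ) * (∮ ξ in C(0,R), Fa p q y m ξ * Complex.exp (Ea p q ξ * (t:ℂ)))
          + (q:ℂ) * (∮ ξ in C(0,R), Fa p q y (m+2) ξ * Complex.exp (Ea p q ξ * (t:ℂ)))
          - (∮ ξ in C(0,R), Fa p q y (m+1) ξ * Complex.exp (Ea p q ξ * (t:ℂ))) := by
      have e1 : (∮ ξ in C(0,R), Fa p q y (m+1) ξ * Ea p q ξ * Complex.exp (Ea p q ξ * (t:ℂ)))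
          = ∮ ξ in C(0,R), (((p:ℂ) * (Fa p q y m ξ * Complex.exp (Ea p q ξ * (t:ℂ)))
              + (q:ℂ) * (Fa p q y (m+2) ξ * Complex.exp (Ea p q ξ * (t:ℂ))))
              - Fa p q y (m+1) ξ * Complex.exp (Ea p q ξ * (t:ℂ))) := by
        refine circleIntegral.integral_congr hR0.le fun ξ hξ => ?_
        obtain ⟨h0, h1⟩ := sphere_props hR1 hξ
        have hk := key1 p q hq0 y h0 h1 m
        linear_combination (-(Complex.exp (Ea p q ξ * (t:ℂ)))) * hk
      rw [e1, circleIntegral.integral_sub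
          (((continuousOn_const.fun_mul (hc m)).fun_add
            (continuousOn_const.fun_mul (hc (m+2)))).circleIntegrable hR0.le)
          ((hc (m+1)).circleIntegrable hR0.le),
        circleIntegral_add' ((continuousOn_const.fun_mul (hc m)).circleIntegrable hR0.le)
          ((continuousOn_const.fun_mul (hc (m+2))).circleIntegrable hR0.le),
        circleIntegral.integral_const_mul, circleIntegral.integral_const_mul]
    refine HasDerivAt.hasDerivWithinAt ?_
    convert hder using 1
    rfl
    rw [hval]; ring
  · -- boundary equation
    intro t ht
    simp only [uASEP_eq]
    have hder := (hasDerivAt_circleIntegral_exp hR0 (FaCont p q y 0 hR1)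
      (EaCont p q hR1) t).const_mul ((2 * Real.pi * Complex.I : ℂ))⁻¹
    have hc : ∀ z : ℕ, ContinuousOn
        (fun ξ => Fa p q y z ξ * Complex.exp (Ea p q ξ * (t:ℂ))) (sphere (0:ℂ) R) := fun z =>
      (FaCont p q y z hR1).mul (((EaCont p q hR1).mul continuousOn_const).cexp)
    have hval : (∮ ξ in C(0,R), Fa p q y 0 ξ * Ea p q ξ * Complex.exp (Ea p q ξ * (t:ℂ)))
        = (q:ℂ) * (∮ ξ in C(0,R), Fa p q y 1 ξ * Complex.exp (Ea p q ξ * (t:ℂ)))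
          - (p:ℂ) * (∮ ξ in C(0,R), Fa p q y 0 ξ * Complex.exp (Ea p q ξ * (t:ℂ))) := by
      have e1 : (∮ ξ in C(0,R), Fa p q y 0 ξ * Ea p q ξ * Complex.exp (Ea p q ξ * (t:ℂ)))
          = ∮ ξ in C(0,R), ((q:ℂ) * (Fa p q y 1 ξ * Complex.exp (Ea p q ξ * (t:ℂ)))
              - (p:ℂ) * (Fa p q y 0 ξ * Complex.exp (Ea p q ξ * (t:ℂ)))) := by
        refine circleIntegral.integral_congr hR0.le fun ξ hξ => ?_
        obtain ⟨h0, h1⟩ := sphere_props hR1 hξ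
        have hk := key0 p q hq0 hpq y h0 h1
        linear_combination (-(Complex.exp (Ea p q ξ * (t:ℂ)))) * hk
      rw [e1, circleIntegral.integral_sub
          ((continuousOn_const.fun_mul (hc 1)).circleIntegrable hR0.le)
          ((continuousOn_const.fun_mul (hc 0)).circleIntegrable hR0.le),
        circleIntegral.integral_const_mul, circleIntegral.integral_const_mul]
    refine HasDerivAt.hasDerivWithinAt ?_
    convert hder using 1
    rfl
    rw [hval]; ring
end
end
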